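/- The separator encoding map is not injective: for a sentence of 3 words, the crossing mention set {[1,2],[2,3]} and the nested mention set {[1,3],[2,2]} are distinct sets of intervals that yield the same separator sequence ({S}, {C,S}, {E,C}, {E}). -/
import Mathlib


inductive Marker | S | E | C
deriving DecidableEq

/-- Separator sequence of a set of mentions (intervals). Gap `k` lies between word `k` and word `k+1`. -/
def sep (M : Set (ℕ × ℕ)) (k : ℕ) : Set Marker :=
  {m | (m = Marker.S ∧ ∃ p ∈ M, p.1 = k + 1) ∨
       (m = Marker.E ∧ ∃ p ∈ M, p.2 = k) ∨
       (m = Marker.C ∧ ∃ p ∈ M, p.1 ≤ k ∧ k + 1 ≤ p.2)}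

/-- `M` is a set of mentions over a sentence of `n` words. -/
def Valid (n : ℕ) (M : Set (ℕ × ℕ)) : Prop :=
  ∀ p ∈ M, 1 ≤ p.1 ∧ p.1 ≤ p.2 ∧ p.2 ≤ n
theorem encoding_not_injective :
    ({((1:ℕ), (2:ℕ)), (2, 3)} : Set (ℕ × ℕ)) ≠ ({(1, 3), (2, 2)} : Set (ℕ × ℕ)) ∧
    sep {((1:ℕ), (2:ℕ)), (2, 3)} = sep {(1, 3), (2, 2)} ∧
    sep ({((1:ℕ), (2:ℕ)), (2, 3)} : Set (ℕ × ℕ)) 0 = {Marker.S} ∧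
    sep ({((1:ℕ), (2:ℕ)), (2, 3)} : Set (ℕ × ℕ)) 1 = {Marker.C, Marker.S} ∧
    sep ({((1:ℕ), (2:ℕ)), (2, 3)} : Set (ℕ × ℕ)) 2 = {Marker.E, Marker.C} ∧
    sep ({((1:ℕ), (2:ℕ)), (2, 3)} : Set (ℕ × ℕ)) 3 = {Marker.E} := by
  refine ⟨?_, ?_, ?_, ?_, ?_, ?_⟩
  · intro h
    have : ((1:ℕ),(2:ℕ)) ∈ ({(1, 3), (2, 2)} : Set (ℕ × ℕ)) := h ▸ (by simp)
    simp at this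
  all_goals
    first
    | (funext k; ext m; simp [sep, Set.mem_setOf_eq]
       rcases m with _|_|_ <;> simp <;> omega)
    | (ext m; rcases m with _|_|_ <;> simp [sep, Set.mem_setOf_eq] <;> omega)
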